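/- Let T be a densely defined closed paranormal operator in H. If λ₁ ≠ λ₂ are two isolated points of σ(T), then the eigenspaces N(T − λ₁I) and N(T − λ₂I) are orthogonal. -/

import Mathlib

open Filter Topology


open scoped InnerProductSpace
open LinearPMap

noncomputable section

variable {H : Type*} [NormedAddCommGroup H] [InnerProductSpace ℂ H] [CompleteSpace H]

/-- `T` is paranormal: `‖Tx‖² ≤ ‖T²x‖ ‖x‖` for all `x ∈ D(T²)`. -/
def Paranormal (T : H →ₗ.[ℂ] H) : Prop :=
  ∀ (x : T.domain) (h : T x ∈ T.domain), ‖T x‖ ^ 2 ≤ ‖T ⟨T x, h⟩‖ * ‖(x : H)‖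

/-- The operator `T - μ • I`, with the same domain as `T`. -/
def shiftOp (T : H →ₗ.[ℂ] H) (μ : ℂ) : H →ₗ.[ℂ] H :=
  ⟨T.domain, T.toFun - μ • T.domain.subtype⟩

/-- `T` is bijective from its domain onto `H` with a bounded everywhere-defined inverse. -/
def HasBoundedInverse (T : H →ₗ.[ℂ] H) : Prop :=
  ∃ S : H →L[ℂ] H, (∀ y : H, ∃ hy : S y ∈ T.domain, T ⟨S y, hy⟩ = y) ∧
    ∀ x : T.domain, S (T x) = (x : H)

/-- The spectrum of a (possibly unbounded) operator `T`. -/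
def pSpectrum (T : H →ₗ.[ℂ] H) : Set ℂ :=
  {μ | ¬ HasBoundedInverse (shiftOp T μ)}

/-- `μ` is an isolated point of the spectrum of `T`. -/
def IsolatedSpectralPoint (T : H →ₗ.[ℂ] H) (μ : ℂ) : Prop :=
  μ ∈ pSpectrum T ∧ ∃ ε > 0, ∀ ν ∈ pSpectrum T, ν ≠ μ → ε ≤ dist ν μ

open Classical in
/-- The resolvent `(T - z)⁻¹` as a bounded operator (junk value `0` if `z ∈ σ(T)`). -/
def resolventOp (T : H →ₗ.[ℂ] H) (z : ℂ) : H →L[ℂ] H :=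
  if h : HasBoundedInverse (shiftOp T z) then h.choose else 0

/-- The Riesz projection `E_μ = (2πi)⁻¹ ∮_{|z-μ|=r} (z - T)⁻¹ dz`
(note `(z - T)⁻¹ = -(T - z)⁻¹`). -/
def rieszProjection (T : H →ₗ.[ℂ] H) (μ : ℂ) (r : ℝ) : H →L[ℂ] H :=
  -(2 * Real.pi * Complex.I)⁻¹ • ∮ z in C(μ, r), resolventOp T z

/-- The kernel `N(T - μ I)` as a subset of `H`. -/
def kernelSet (T : H →ₗ.[ℂ] H) (μ : ℂ) : Set H :=
  {x | ∃ h : x ∈ T.domain, T ⟨x, h⟩ = μ • x}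

/-- The range `R(T - μ I)` as a subset of `H`. -/
def rangeSet (T : H →ₗ.[ℂ] H) (μ : ℂ) : Set H :=
  Set.range fun x : T.domain => T x - μ • (x : H)


lemma aux_poly (A0 A1 A2 B0 B1 B2 C0 C1 C2 : ℝ) (h0 : A0 * C0 = B0 ^ 2)
    (h : ∀ t : ℝ, 0 < t →
      (B0 + B1*t + B2*t^2)^2 ≤ (A0 + A1*t + A2*t^2) * (C0 + C1*t + C2*t^2)) :
    0 ≤ A0*C1 + A1*C0 - 2*B0*B1 := by
  set G : ℝ → ℝ := fun t => (A0*C1 + A1*C0 - 2*B0*B1)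
      + t*(A0*C2 + A1*C1 + A2*C0 - B1^2 - 2*B0*B2)
      + t^2*(A1*C2 + A2*C1 - 2*B1*B2) + t^3*(A2*C2 - B2^2) with hG
  have key : ∀ t : ℝ, 0 < t → 0 ≤ G t := by
    intro t ht
    have h1 := h t ht
    have h2 : (A0 + A1*t + A2*t^2) * (C0 + C1*t + C2*t^2) - (B0 + B1*t + B2*t^2)^2
        = t * G t := by
      simp only [hG]; linear_combination h0
    nlinarith [h2]
  have hcont : Continuous G := by fun_prop
  have htend : Tendsto G (𝓝[>] (0:ℝ)) (𝓝 (G 0)) :=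
    (hcont.tendsto 0).mono_left nhdsWithin_le_nhds
  have h0le : (0:ℝ) ≤ G 0 :=
    ge_of_tendsto htend (by filter_upwards [self_mem_nhdsWithin] with t ht using key t ht)
  have : G 0 = A0*C1 + A1*C0 - 2*B0*B1 := by simp [hG]
  linarith [this ▸ h0le]

lemma norm_smul_add_smul_sq (a b : ℂ) (u v : H) :
    ‖a • u + b • v‖ ^ 2
      = ‖a‖^2 * ‖u‖^2 + 2 * (((starRingEnd ℂ) a * b * ⟪u, v⟫_ℂ).re) + ‖b‖^2 * ‖v‖^2 := by
  rw [@norm_add_sq ℂ]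
  simp [inner_smul_left, inner_smul_right, norm_smul, mul_pow]
  ring

lemma key_orth (x y : H) (μ₁ μ₂ : ℂ) (hμ₂ : μ₂ ≠ 0) (hne : μ₁ ≠ μ₂)
    (hineq : ∀ ε : ℂ,
      ‖μ₂ • y + (ε * μ₁) • x‖ ^ 2 ≤ ‖(μ₂^2) • y + (ε * μ₁^2) • x‖ * ‖y + ε • x‖) :
    ⟪x, y⟫_ℂ = 0 := by
  rcases eq_or_ne y 0 with rfl | hy
  · simp
  set P : ℂ := ⟪y, x⟫_ℂ with hP
  set D : ℂ := P * ((starRingEnd ℂ) μ₂)^2 * (μ₁ - μ₂)^2 with hD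
  set c : ℂ := -((starRingEnd ℂ) D) with hc
  have hmain : 0 ≤ (‖μ₂^2‖^2 * ‖y‖^2) * (2 * ((c * P).re))
      + (2 * (((starRingEnd ℂ) (μ₂^2) * (c * μ₁^2) * P).re)) * ‖y‖^2
      - 2 * (‖μ₂‖^2 * ‖y‖^2) * (2 * (((starRingEnd ℂ) μ₂ * (c * μ₁) * P).re)) := by
    apply aux_poly (A2 := ‖c * μ₁^2‖^2 * ‖x‖^2) (B2 := ‖c * μ₁‖^2 * ‖x‖^2)
      (C2 := ‖c‖^2 * ‖x‖^2)
    · rw [show ‖μ₂^2‖^2 = (‖μ₂‖^2)^2 by rw [norm_pow]]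
      ring
    · intro t ht
      have h1 := hineq ((t : ℂ) * c)
      have h2 : (‖μ₂ • y + (((t:ℂ) * c) * μ₁) • x‖ ^ 2)^2
          ≤ (‖(μ₂^2) • y + (((t:ℂ) * c) * μ₁^2) • x‖ * ‖y + ((t:ℂ) * c) • x‖)^2 :=
        pow_le_pow_left₀ (sq_nonneg _) h1 2
      rw [mul_pow] at h2
      have eB : ‖μ₂ • y + (((t:ℂ) * c) * μ₁) • x‖ ^ 2
          = (‖μ₂‖^2 * ‖y‖^2) + (2 * (((starRingEnd ℂ) μ₂ * (c * μ₁) * P).re)) * t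
            + (‖c * μ₁‖^2 * ‖x‖^2) * t^2 := by
        rw [norm_smul_add_smul_sq]
        rw [show (starRingEnd ℂ) μ₂ * (((t:ℂ) * c) * μ₁) * P
            = (t:ℂ) * ((starRingEnd ℂ) μ₂ * (c * μ₁) * P) by ring]
        rw [Complex.re_ofReal_mul]
        rw [show ((t:ℂ) * c) * μ₁ = (t:ℂ) * (c * μ₁) by ring, norm_mul, Complex.norm_real,
          Real.norm_eq_abs, abs_of_pos ht]
        ring
      have eA : ‖(μ₂^2) • y + (((t:ℂ) * c) * μ₁^2) • x‖ ^ 2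
          = (‖μ₂^2‖^2 * ‖y‖^2) + (2 * (((starRingEnd ℂ) (μ₂^2) * (c * μ₁^2) * P).re)) * t
            + (‖c * μ₁^2‖^2 * ‖x‖^2) * t^2 := by
        rw [norm_smul_add_smul_sq]
        rw [show (starRingEnd ℂ) (μ₂^2) * (((t:ℂ) * c) * μ₁^2) * P
            = (t:ℂ) * ((starRingEnd ℂ) (μ₂^2) * (c * μ₁^2) * P) by ring]
        rw [Complex.re_ofReal_mul]
        rw [show ((t:ℂ) * c) * μ₁^2 = (t:ℂ) * (c * μ₁^2) by ring, norm_mul, Complex.norm_real,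
          Real.norm_eq_abs, abs_of_pos ht]
        ring
      have eC : ‖y + ((t:ℂ) * c) • x‖ ^ 2
          = ‖y‖^2 + (2 * ((c * P).re)) * t + (‖c‖^2 * ‖x‖^2) * t^2 := by
        have := norm_smul_add_smul_sq (1 : ℂ) ((t:ℂ) * c) y x
        simp only [one_smul, map_one, one_mul, norm_one, one_pow] at this
        rw [this]
        rw [show (t:ℂ) * c * P = (t:ℂ) * (c * P) by ring, Complex.re_ofReal_mul]
        rw [norm_mul, Complex.norm_real, Real.norm_eq_abs, abs_of_pos ht]
        ring
      rw [eA, eB, eC] at h2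
      exact h2
  -- Now rewrite the linear coefficient as -2‖y‖² normSq D
  have hW : ((‖μ₂^2‖^2 : ℝ) : ℂ) * (c * P) + (starRingEnd ℂ) (μ₂^2) * (c * μ₁^2) * P
      - 2 * ((‖μ₂‖^2 : ℝ) : ℂ) * ((starRingEnd ℂ) μ₂ * (c * μ₁) * P)
      = -((Complex.normSq D : ℝ) : ℂ) := by
    have e1 : ((‖μ₂‖^2 : ℝ) : ℂ) = μ₂ * (starRingEnd ℂ) μ₂ := by
      rw [Complex.sq_norm, Complex.mul_conj]
    have e2 : ((‖μ₂^2‖^2 : ℝ) : ℂ) = μ₂^2 * (starRingEnd ℂ) (μ₂^2) := by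
      rw [Complex.sq_norm, Complex.mul_conj]
    have e3 : ((Complex.normSq D : ℝ) : ℂ) = D * (starRingEnd ℂ) D :=
      (Complex.mul_conj D).symm
    rw [e1, e2, e3, hc, hD]
    simp only [map_mul, map_pow, _root_.map_sub, _root_.map_neg, _root_.map_add, Complex.conj_conj]
    ring
  have hre : (‖μ₂^2‖^2 * ‖y‖^2) * (2 * ((c * P).re))
      + (2 * (((starRingEnd ℂ) (μ₂^2) * (c * μ₁^2) * P).re)) * ‖y‖^2
      - 2 * (‖μ₂‖^2 * ‖y‖^2) * (2 * (((starRingEnd ℂ) μ₂ * (c * μ₁) * P).re))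
      = 2 * ‖y‖^2 * ((((‖μ₂^2‖^2 : ℝ) : ℂ) * (c * P)
          + (starRingEnd ℂ) (μ₂^2) * (c * μ₁^2) * P
          - 2 * ((‖μ₂‖^2 : ℝ) : ℂ) * ((starRingEnd ℂ) μ₂ * (c * μ₁) * P)).re) := by
    simp only [Complex.add_re, Complex.sub_re, Complex.re_ofReal_mul,
      show (2 : ℂ) * ((‖μ₂‖^2 : ℝ) : ℂ) * ((starRingEnd ℂ) μ₂ * (c * μ₁) * P)
        = ((2 * ‖μ₂‖^2 : ℝ) : ℂ) * ((starRingEnd ℂ) μ₂ * (c * μ₁) * P) by push_cast; ring]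
    ring
  rw [hre, hW] at hmain
  simp only [Complex.neg_re, Complex.ofReal_re] at hmain
  have hypos : 0 < ‖y‖^2 := pow_pos (norm_pos_iff.mpr hy) 2
  have hD0 : Complex.normSq D = 0 := by
    have := Complex.normSq_nonneg D
    nlinarith
  have hDz : D = 0 := by rwa [Complex.normSq_eq_zero] at hD0
  have hP0 : P = 0 := by
    rcases mul_eq_zero.mp hDz with h' | h'
    · rcases mul_eq_zero.mp h' with h'' | h''
      · exact h''
      · exact absurd (pow_eq_zero_iff (n := 2) (by norm_num) |>.mp h'')
          (by simpa using hμ₂)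
    · exact absurd (pow_eq_zero_iff (n := 2) (by norm_num) |>.mp h')
        (sub_ne_zero.mpr hne)
  rw [← inner_conj_symm, ← hP, hP0, _root_.map_zero]

lemma eig_orth (T : H →ₗ.[ℂ] H) (hpara : Paranormal T) (μ₁ μ₂ : ℂ)
    (hμ₂ : μ₂ ≠ 0) (hne : μ₁ ≠ μ₂)
    {x y : H} (hx : x ∈ kernelSet T μ₁) (hy : y ∈ kernelSet T μ₂) :
    ⟪x, y⟫_ℂ = 0 := by
  obtain ⟨hxd, hTx⟩ := hx
  obtain ⟨hyd, hTy⟩ := hy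
  apply key_orth x y μ₁ μ₂ hμ₂ hne
  intro ε
  set X' : T.domain := ⟨x, hxd⟩ with hX'
  set Y' : T.domain := ⟨y, hyd⟩ with hY'
  set v : T.domain := Y' + ε • X' with hv
  have hvc : (v : H) = y + ε • x := rfl
  have hTv : T v = μ₂ • y + (ε * μ₁) • x := by
    rw [hv, LinearPMap.map_add, LinearPMap.map_smul, hTx, hTy, smul_smul]
  have hmem : T v ∈ T.domain := by
    rw [hTv]
    exact add_mem (Submodule.smul_mem _ _ hyd) (Submodule.smul_mem _ _ hxd)
  have hsub : (⟨T v, hmem⟩ : T.domain) = μ₂ • Y' + (ε * μ₁) • X' := by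
    apply Subtype.ext
    simp only [Submodule.coe_add, SetLike.val_smul, hX', hY']
    exact hTv
  have h2 : T ⟨T v, hmem⟩ = (μ₂ ^ 2) • y + (ε * μ₁ ^ 2) • x := by
    rw [hsub, LinearPMap.map_add, LinearPMap.map_smul, LinearPMap.map_smul, hTx, hTy, smul_smul, smul_smul]
    rw [show μ₂ * μ₂ = μ₂ ^ 2 by ring, show ε * μ₁ * μ₁ = ε * μ₁ ^ 2 by ring]
  have := hpara v hmem
  rwa [h2, hvc, hTv] at this


/-- Eigenspaces of a densely defined closed paranormal operator at two distinct isolated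
spectral points are orthogonal. -/
theorem stmt19 (T : H →ₗ.[ℂ] H) (hdense : Dense (T.domain : Set H)) (hclosed : T.IsClosed)
    (hpara : Paranormal T) (μ₁ μ₂ : ℂ) (hne : μ₁ ≠ μ₂)
    (h1 : IsolatedSpectralPoint T μ₁) (h2 : IsolatedSpectralPoint T μ₂) :
    ∀ x ∈ kernelSet T μ₁, ∀ y ∈ kernelSet T μ₂, ⟪x, y⟫_ℂ = 0 := by
  intro x hx y hy
  rcases eq_or_ne μ₂ 0 with rfl | hμ₂
  · have h := eig_orth T hpara 0 μ₁ hne hne.symm hy hx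
    rw [← inner_conj_symm, h, _root_.map_zero]
  · exact eig_orth T hpara μ₁ μ₂ hμ₂ hne hx hy

end
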